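/- Let G be the graph on 2n vertices X_1,...,X_{2n} whose only non-edges are {X_i, X_{i+n}} for i = 1,...,n, with all variables binary. Let u be the 0/1 exponent vector supported on states (i_1,...,i_{2n}) ∈ {0,1}^{2n} with i_1 = i_3 = ... = i_{2n−1} and i_1 ≡ i_2 + i_4 + ... + i_{2n} (mod 2), and v the analogous vector with i_1 ≢ i_2 + i_4 + ... + i_{2n} (mod 2). Then u and v each have exactly 2^n nonzero entries, and A(G)u = A(G)v; i.e., p^u − p^v is a binomial of degree 2^n in the toric ideal I_{A(G)}. -/

import Mathlib

lemma sum_odd_reindex (n : ℕ) (g : Fin (2*n) → ℕ) :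
    (∑ k : Fin (2*n), if k.val % 2 = 1 then g k else 0)
      = ∑ i : Fin n, g ⟨2*i.val+1, by omega⟩ := by
  rw [← Finset.sum_filter]
  refine Finset.sum_nbij' (fun k => (⟨k.val/2, by
      have := k.isLt; omega⟩ : Fin n)) (fun i => (⟨2*i.val+1, by omega⟩ : Fin (2*n)))
      ?_ ?_ ?_ ?_ ?_
  · intro a _; exact Finset.mem_univ _
  · intro a _; simp only [Finset.mem_filter]; exact ⟨Finset.mem_univ _, by omega⟩
  · intro a ha; simp only [Finset.mem_filter] at ha
    exact Fin.ext (by simp; omega)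
  · intro a _; exact Fin.ext (by simp; omega)
  · intro a ha; simp only [Finset.mem_filter] at ha
    congr 1; exact Fin.ext (by simp; omega)

lemma count_support (n : ℕ) (hn : 0 < n) (b : ℕ) :
    (Finset.univ.filter (fun s : Fin (2*n) → Fin 2 =>
      (∀ k : Fin (2*n), k.val % 2 = 0 → s k = s ⟨0, Nat.mul_pos (by norm_num) hn⟩) ∧
      (s ⟨0, Nat.mul_pos (by norm_num) hn⟩).val
        = ((∑ k : Fin (2*n), if k.val % 2 = 1 then (s k).val else 0) + b) % 2)).card
    = 2 ^ n := by
  rw [show (2:ℕ)^n = (Finset.univ : Finset (Fin n → Fin 2)).card by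
    simp [Fintype.card_fun]]
  refine Finset.card_nbij' (fun s => fun i : Fin n => s ⟨2*i.val+1, by omega⟩)
    (fun t => fun k : Fin (2*n) =>
      if h : k.val % 2 = 1 then t ⟨k.val/2, by have := k.isLt; omega⟩
      else ⟨((∑ i : Fin n, (t i).val) + b) % 2, by omega⟩) ?_ ?_ ?_ ?_
  · intro a _; exact Finset.mem_univ _
  · intro t _
    simp only [Finset.mem_coe, Finset.mem_filter, Finset.mem_univ, true_and]
    constructor
    · intro k hk
      rw [dif_neg (by omega), dif_neg (by norm_num)]
    · rw [dif_neg (by norm_num)]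
      simp only
      congr 2
      rw [sum_odd_reindex n (fun k => ((if h : k.val % 2 = 1 then
          t ⟨k.val/2, by have := k.isLt; omega⟩
          else ⟨((∑ i : Fin n, (t i).val) + b) % 2, by omega⟩ : Fin 2)).val)]
      refine (Finset.sum_congr rfl fun i _ => ?_).symm
      rw [dif_pos (by first | omega | (simp only [Fin.val_mk]; omega))]
      refine congrArg _ (congrArg t (Fin.ext ?_))
      simp only [Fin.val_mk]
      omega
  · intro s hs
    simp only [Finset.mem_coe, Finset.mem_filter, Finset.mem_univ, true_and] at hs
    obtain ⟨heven, hpar⟩ := hs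
    funext k
    dsimp only
    by_cases h : k.val % 2 = 1
    · rw [dif_pos h]
      congr 1
      exact Fin.ext (by simp only [Fin.val_mk]; omega)
    · rw [dif_neg h]
      rw [heven k (by omega)]
      refine Fin.ext ?_
      simp only [Fin.val_mk]
      rw [hpar]
      congr 2
      rw [sum_odd_reindex n (fun k => (s k).val)]
  · intro t _
    funext i
    dsimp only
    rw [dif_pos (by first | omega | (simp only [Fin.val_mk]; omega))]
    congr 1
    exact Fin.ext (by simp only [Fin.val_mk]; omega)

lemma sum_swap_inv {α : Type*} [Fintype α] (u v : α → ℕ) (q : α → Prop) [DecidablePred q]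
    (τ : α → α) (hτ : Function.Involutive τ) (hq : ∀ s, q (τ s) ↔ q s)
    (huv : ∀ s, u (τ s) = v s) :
    (∑ s, if q s then u s else 0) = ∑ s, if q s then v s else 0 := by
  refine Fintype.sum_bijective τ hτ.bijective _ _ fun s => ?_
  by_cases h : q s
  · rw [if_pos h, if_pos ((hq s).mpr h)]
    rw [← huv (τ s), hτ s]
  · rw [if_neg h, if_neg (fun hh => h ((hq s).mp hh))]

lemma fin2_aa (x : Fin 2) : x + 1 + 1 = x := by
  fin_cases x <;> rfl

lemma fin2_val_add_one (x : Fin 2) : (x + 1).val = (x.val + 1) % 2 := by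
  rw [Fin.val_add]; rfl



/-- Proposition 2: For the graph `G` on `2n` binary variables whose only
non-edges are `{Xᵢ, Xᵢ₊ₙ}` (`i = 1,…,n`; in 0-based indexing the non-edges are
`{i, i+n}` for `i < n`, and the 1-based odd-indexed variables `X₁,X₃,…,X_{2n−1}` are the
0-based even positions), the 0/1 exponent vectors `u` (states with all even positions
equal and matching parity) and `v` (mismatching parity) each have exactly `2ⁿ` nonzero
entries and satisfy `A(G)u = A(G)v`: for every clique `C` of `G` and every assignment on
`C`, the number of supported states of `u` extending it equals that of `v`.  Thus
`p^u − p^v` is a degree-`2ⁿ` binomial in the toric ideal `I_{A(G)}`. -/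
theorem matching_complement_binomial_of_degree_two_pow (n : ℕ) (hn : 0 < n)
    (u v : (Fin (2 * n) → Fin 2) → ℕ)
    (hu : ∀ s, u s =
      if (∀ k : Fin (2 * n), k.val % 2 = 0 → s k = s ⟨0, by omega⟩) ∧
         (s ⟨0, by omega⟩).val % 2 =
           (∑ k : Fin (2 * n), if k.val % 2 = 1 then (s k).val else 0) % 2
      then 1 else 0)
    (hv : ∀ s, v s =
      if (∀ k : Fin (2 * n), k.val % 2 = 0 → s k = s ⟨0, by omega⟩) ∧
         (s ⟨0, by omega⟩).val % 2 ≠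
           (∑ k : Fin (2 * n), if k.val % 2 = 1 then (s k).val else 0) % 2
      then 1 else 0) :
    (∑ s, u s = 2 ^ n) ∧ (∑ s, v s = 2 ^ n) ∧
    (∀ C : Finset (Fin (2 * n)),
      (∀ i ∈ C, ∀ j ∈ C, i ≠ j → ¬(j.val = i.val + n ∨ i.val = j.val + n)) →
      ∀ f : Fin (2 * n) → Fin 2,
        (∑ s, if ∀ k ∈ C, s k = f k then u s else 0) =
        (∑ s, if ∀ k ∈ C, s k = f k then v s else 0)) := by
  refine ⟨?_, ?_, ?_⟩
  · simp_rw [hu]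
    rw [← Finset.card_filter, ← count_support n hn 0]
    congr 1
    refine Finset.filter_congr fun s _ => ?_
    refine and_congr Iff.rfl ?_
    have h2 := (s ⟨0, by omega⟩).isLt
    constructor <;> intro h <;> omega
  · simp_rw [hv]
    rw [← Finset.card_filter, ← count_support n hn 1]
    congr 1
    refine Finset.filter_congr fun s _ => ?_
    refine and_congr Iff.rfl ?_
    have h2 := (s ⟨0, by omega⟩).isLt
    constructor <;> intro h <;> omega
  · intro C hC f
    by_cases hj : ∃ j : Fin (2*n), j.val % 2 = 1 ∧ j ∉ C
    · obtain ⟨j, hj1, hj2⟩ := hj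
      refine sum_swap_inv u v _ (fun s => Function.update s j (s j + 1)) ?_ ?_ ?_
      · intro s; funext k
        rcases eq_or_ne k j with rfl | hkj
        · simp only [Function.update_self, fin2_aa]
        · simp only [Function.update_of_ne hkj]
      · intro s
        have hfix : ∀ k ∈ C, Function.update s j (s j + 1) k = s k := by
          intro k hk
          refine Function.update_of_ne ?_ _ _
          rintro rfl; exact hj2 hk
        constructor <;> intro h k hk
        · rw [← hfix k hk]; exact h k hk
        · rw [hfix k hk]; exact h k hk
      · intro s
        rw [hu, hv]
        have h0 : Function.update s j (s j + 1) ⟨0, by omega⟩ = s ⟨0, by omega⟩ :=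
          Function.update_of_ne (Fin.ne_of_val_ne (by simp only [Fin.val_mk]; omega)) _ _
        have heq : ∀ k : Fin (2*n), k.val % 2 = 0 →
            Function.update s j (s j + 1) k = s k :=
          fun k hk => Function.update_of_ne (Fin.ne_of_val_ne (by omega)) _ _
        have hsum1 : (∑ k : Fin (2*n),
              if k.val % 2 = 1 then ((Function.update s j (s j + 1)) k).val else 0)
            = (∑ k ∈ Finset.univ.erase j, if k.val % 2 = 1 then (s k).val else 0)
              + ((s j).val + 1) % 2 := by
          rw [← Finset.sum_erase_add _ _ (Finset.mem_univ j)]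
          congr 1
          · exact Finset.sum_congr rfl fun k hk => by
              rw [Function.update_of_ne (Finset.ne_of_mem_erase hk)]
          · rw [if_pos hj1, Function.update_self, fin2_val_add_one]
        have hsum2 : (∑ k : Fin (2*n), if k.val % 2 = 1 then (s k).val else 0)
            = (∑ k ∈ Finset.univ.erase j, if k.val % 2 = 1 then (s k).val else 0)
              + (s j).val := by
          rw [← Finset.sum_erase_add _ _ (Finset.mem_univ j)]
          congr 1
          rw [if_pos hj1]
        refine if_congr (and_congr ?_ ?_) rfl rfl
        · constructor <;> intro h k hk
          · rw [← heq k hk, ← h0]; exact h k hk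
          · rw [heq k hk, h0]; exact h k hk
        · rw [h0, hsum1, hsum2]
          have h2 := (s ⟨0, by omega⟩).isLt
          have h3 := (s j).isLt
          constructor <;> intro h <;> omega
    · push_neg at hj
      rcases Nat.even_or_odd n with he | ho
      · exfalso
        obtain ⟨m, hm⟩ := he
        have h1 : (⟨1, by omega⟩ : Fin (2*n)) ∈ C := hj _ (by simp only [Fin.val_mk])
        have h2 : (⟨n+1, by omega⟩ : Fin (2*n)) ∈ C :=
          hj _ (by simp only [Fin.val_mk]; omega)
        exact hC _ h1 _ h2 (Fin.ne_of_val_ne (by simp only [Fin.val_mk]; omega))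
          (Or.inl (by simp only [Fin.val_mk]; omega))
      · obtain ⟨m, hm⟩ := ho
        have hodd : ∀ k ∈ C, k.val % 2 = 1 := by
          intro k hk
          by_contra hke
          have hke' : k.val % 2 = 0 := by omega
          by_cases hlt : k.val < n
          · have hp : (⟨k.val + n, by omega⟩ : Fin (2*n)) ∈ C :=
              hj _ (by simp only [Fin.val_mk]; omega)
            exact hC k hk _ hp (Fin.ne_of_val_ne (by simp only [Fin.val_mk]; omega))
              (Or.inl (by simp only [Fin.val_mk]))
          · have hge : n ≤ k.val := le_of_not_gt hlt
            have hp : (⟨k.val - n, by omega⟩ : Fin (2*n)) ∈ C :=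
              hj _ (by simp only [Fin.val_mk]; omega)
            exact hC k hk _ hp (Fin.ne_of_val_ne (by simp only [Fin.val_mk]; omega))
              (Or.inr (by simp only [Fin.val_mk]; omega))
        refine sum_swap_inv u v _
          (fun s => fun k => if k.val % 2 = 0 then s k + 1 else s k) ?_ ?_ ?_
        · intro s; funext k; dsimp only
          by_cases hk : k.val % 2 = 0
          · rw [if_pos hk, if_pos hk, fin2_aa]
          · rw [if_neg hk, if_neg hk]
        · intro s
          dsimp only
          have hfix : ∀ k ∈ C,
              (if k.val % 2 = 0 then s k + 1 else s k) = s k := fun k hk => by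
            rw [if_neg (by have := hodd k hk; omega)]
          constructor <;> intro h k hk
          · rw [← hfix k hk]; exact h k hk
          · rw [hfix k hk]; exact h k hk
        · intro s
          rw [hu, hv]
          have h0 : (if ((⟨0, by omega⟩ : Fin (2*n))).val % 2 = 0
              then s ⟨0, by omega⟩ + 1 else s ⟨0, by omega⟩) = s ⟨0, by omega⟩ + 1 := by
            rw [if_pos (by simp only [Fin.val_mk])]
          have hFs : (∑ k : Fin (2*n), if k.val % 2 = 1
                then ((if k.val % 2 = 0 then s k + 1 else s k) : Fin 2).val else 0)
              = ∑ k : Fin (2*n), if k.val % 2 = 1 then (s k).val else 0 := by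
            refine Finset.sum_congr rfl fun k _ => ?_
            by_cases hk : k.val % 2 = 1
            · rw [if_pos hk, if_pos hk, if_neg (by omega)]
            · rw [if_neg hk, if_neg hk]
          refine if_congr (and_congr ?_ ?_) rfl rfl
          · dsimp only
            rw [h0]
            refine forall_congr' fun k => ?_
            constructor <;> intro h hk
            · have h' := h hk
              rw [if_pos hk] at h'
              exact add_right_cancel h'
            · rw [if_pos hk, h hk]
          · rw [h0, hFs, fin2_val_add_one]
            have h2 := (s ⟨0, by omega⟩).isLt
            constructor <;> intro h <;> omega
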